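/- In the setting of the Floquet decomposition w11(τ) = γ u̇0(τ) + e^{−f0 τ} b(τ) (u0 a nonconstant 2πρ-periodic C² solution of ü + f(u)u̇ + g(u) = 0 with u̇0(0) = 0, ü0(0) ≠ 0, f0 > 0, b continuous 2πρ-periodic, w11 the solution of the linearised equation with w11(0) = 1, ẇ11(0) = 0), assume additionally that u0(τ + πρ) = −u0(τ) for all τ. Then both components are anti-periodic with anti-period πρ: the periodic part a(τ) = γ u̇0(τ) satisfies a(τ + πρ) = −a(τ), and b satisfies b(τ + πρ) = −b(τ) for all τ; that is, the Fourier expansions of a and b contain only the odd harmonics. -/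

import Mathlib

open Real

lemma abel_aux {F V : ℝ → ℝ} (hF : Continuous F)
    (hV : ∀ τ, HasDerivAt V (-(F τ * V τ)) τ) (τ : ℝ) :
    V τ = V 0 * Real.exp (-∫ s in (0:ℝ)..τ, F s) := by
  have hZ : ∀ t : ℝ, HasDerivAt (fun u => ∫ s in (0:ℝ)..u, F s) (F t) t := fun t =>
    intervalIntegral.integral_hasDerivAt_right (hF.intervalIntegrable _ _)
      (hF.stronglyMeasurableAtFilter _ _) hF.continuousAt
  have hg : ∀ t : ℝ, HasDerivAt (fun u => V u * Real.exp (∫ s in (0:ℝ)..u, F s)) 0 t := by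
    intro t
    have h1 := (hV t).mul ((hZ t).exp)
    exact h1.congr_deriv (by ring)
  have hd : Differentiable ℝ (fun u => V u * Real.exp (∫ s in (0:ℝ)..u, F s)) :=
    fun t => (hg t).differentiableAt
  have hc := is_const_of_deriv_eq_zero hd (fun t => (hg t).deriv) τ 0
  simp only [intervalIntegral.integral_same, Real.exp_zero, mul_one] at hc
  rw [Real.exp_neg, ← hc, mul_inv_cancel_right₀ (Real.exp_ne_zero _)]

lemma key_lemma (F Q : ℝ → ℝ) (hF : Continuous F) (T : ℝ)
    (hFper : ∀ τ, F (τ + T) = F τ) (hQper : ∀ τ, Q (τ + T) = Q τ)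
    (p p' ψ ψ' : ℝ → ℝ)
    (hp : ∀ τ, HasDerivAt p (p' τ) τ)
    (hpd : ∀ τ, HasDerivAt p' (-(F τ * p' τ + Q τ * p τ)) τ)
    (hψ : ∀ τ, HasDerivAt ψ (ψ' τ) τ)
    (hψd : ∀ τ, HasDerivAt ψ' (-(F τ * ψ' τ + Q τ * ψ τ)) τ)
    (hpanti : ∀ τ, p (τ + T) = - p τ)
    (hp'anti : ∀ τ, p' (τ + T) = - p' τ)
    (hp0 : p 0 = 0) (hp'0 : p' 0 ≠ 0) (hψ0 : ψ 0 = 1)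
    (lam : ℝ) (hψ2T : ∀ τ, ψ (τ + 2*T) = lam * ψ τ)
    (hlam : lam = (Real.exp (-∫ s in (0:ℝ)..T, F s))^2)
    (hlamne : lam ≠ 1) :
    ∀ τ, ψ (τ + T) = -(Real.exp (-∫ s in (0:ℝ)..T, F s)) * ψ τ := by
  set E : ℝ → ℝ := fun τ => Real.exp (-∫ s in (0:ℝ)..τ, F s) with hE_def
  set φ : ℝ → ℝ := fun τ => ψ (τ + T) with hφ_def
  set φ' : ℝ → ℝ := fun τ => ψ' (τ + T) with hφ'_def
  have hφ : ∀ τ, HasDerivAt φ (φ' τ) τ := by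
    intro τ
    have := (hψ (τ + T)).comp τ ((hasDerivAt_id τ).add_const T)
    simpa [hφ_def, hφ'_def, Function.comp_def] using this
  have hφd : ∀ τ, HasDerivAt φ' (-(F τ * φ' τ + Q τ * φ τ)) τ := by
    intro τ
    have := (hψd (τ + T)).comp τ ((hasDerivAt_id τ).add_const T)
    simp only [Function.comp, mul_one, hFper, hQper] at this
    simpa [hφ_def, hφ'_def, Function.comp_def] using this
  -- generic Wronskian ODE
  have hW : ∀ (q q' w w' : ℝ → ℝ), (∀ τ, HasDerivAt q (q' τ) τ) →
      (∀ τ, HasDerivAt q' (-(F τ * q' τ + Q τ * q τ)) τ) →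
      (∀ τ, HasDerivAt w (w' τ) τ) →
      (∀ τ, HasDerivAt w' (-(F τ * w' τ + Q τ * w τ)) τ) →
      ∀ τ, q τ * w' τ - q' τ * w τ =
        (q 0 * w' 0 - q' 0 * w 0) * E τ := by
    intro q q' w w' hq hqd hw hwd
    have hder : ∀ τ, HasDerivAt (fun t => q t * w' t - q' t * w t)
        (-(F τ * (q τ * w' τ - q' τ * w τ))) τ := by
      intro τ
      have := ((hq τ).mul (hwd τ)).sub ((hqd τ).mul (hw τ))
      exact this.congr_deriv (by ring)
    intro τ
    simpa [hE_def] using abel_aux hF hder τ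
  have hE0 : E 0 = 1 := by simp [hE_def]
  have hEne : ∀ τ, E τ ≠ 0 := fun τ => Real.exp_ne_zero _
  -- Wronskian of p, ψ
  have hW1 : ∀ τ, p τ * ψ' τ - p' τ * ψ τ = (-(p' 0)) * E τ := by
    intro τ
    have := hW p p' ψ ψ' hp hpd hψ hψd τ
    rw [hp0, hψ0] at this
    linear_combination this

  set A : ℝ := (φ' 0 - ψ' 0 * φ 0) / p' 0 with hA_def
  set B : ℝ := φ 0 with hB_def
  set h : ℝ → ℝ := fun t => φ t - A * p t - B * ψ t with hh_def
  set h' : ℝ → ℝ := fun t => φ' t - A * p' t - B * ψ' t with hh'_def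
  have hhas : ∀ τ, HasDerivAt h (h' τ) τ := fun τ =>
    ((hφ τ).sub ((hp τ).const_mul A)).sub ((hψ τ).const_mul B)
  have hhd : ∀ τ, HasDerivAt h' (-(F τ * h' τ + Q τ * h τ)) τ := by
    intro τ
    have := ((hφd τ).sub ((hpd τ).const_mul A)).sub ((hψd τ).const_mul B)
    exact this.congr_deriv (by simp only [hh_def, hh'_def]; ring)
  have hWψh : ∀ τ, ψ τ * h' τ - ψ' τ * h τ = 0 := by
    intro τ
    have := hW ψ ψ' h h' hψ hψd hhas hhd τ
    have hz : ψ 0 * h' 0 - ψ' 0 * h 0 = 0 := by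
      simp only [hh_def, hh'_def, hA_def, hB_def, hp0, hψ0]
      field_simp
      ring
    rw [hz, zero_mul] at this
    exact this
  have hWph : ∀ τ, p τ * h' τ - p' τ * h τ = 0 := by
    intro τ
    have := hW p p' h h' hp hpd hhas hhd τ
    have hz : p 0 * h' 0 - p' 0 * h 0 = 0 := by
      simp only [hh_def, hh'_def, hA_def, hB_def, hp0, hψ0]
      field_simp
      ring
    rw [hz, zero_mul] at this
    exact this
  have hzero : ∀ τ, h τ = 0 := by
    intro τ
    have e1 := hWψh τ
    have e2 := hWph τ
    have e3 := hW1 τ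
    have : h τ * ((-(p' 0)) * E τ) = 0 := by
      rw [← e3]; linear_combination (-(p τ)) * e1 + (ψ τ) * e2
    rcases mul_eq_zero.mp this with h0 | h0
    · exact h0
    · exact absurd h0 (mul_ne_zero (neg_ne_zero.mpr hp'0) (hEne τ))
  have hφAB : ∀ τ, φ τ = A * p τ + B * ψ τ := by
    intro τ
    have := hzero τ
    simp only [hh_def] at this
    linarith
  -- functional identity
  have hiden : ∀ τ, lam * ψ τ = A*(B-1) * p τ + B^2 * ψ τ := by
    intro τ
    have e1 : ψ (τ + 2*T) = φ (τ + T) := by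
      simp only [hφ_def]; ring_nf
    have e2 := hφAB (τ + T)
    rw [hpanti, show ψ (τ + T) = φ τ from rfl, hφAB τ] at e2
    have := hψ2T τ
    rw [e1, e2] at this
    linear_combination (-1 : ℝ) * this
  have hB2 : B^2 = lam := by
    have := hiden 0
    rw [hp0, hψ0] at this
    linarith
  have hBne1 : B ≠ 1 := by
    intro hB1
    rw [hB1] at hB2
    simp at hB2
    exact hlamne hB2.symm
  have hA0 : A = 0 := by
    by_contra hA
    have hpz : ∀ τ, p τ = 0 := by
      intro τ
      have h3 := hiden τ
      rw [← hB2] at h3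
      have h4 : A*(B-1) * p τ = 0 := by linarith
      have h5 : A * (B-1) ≠ 0 := mul_ne_zero hA (sub_ne_zero.mpr hBne1)
      exact (mul_eq_zero.mp h4).resolve_left h5
    have hpfun : p = fun _ => (0:ℝ) := funext hpz
    have := hp 0
    rw [hpfun] at this
    exact hp'0 (this.unique (hasDerivAt_const 0 0))
  -- sign via Abel at T
  have hWT := hW1 T
  have hpT : p T = 0 := by have := hpanti 0; rw [zero_add, hp0] at this; simpa using this
  have hp'T : p' T = - p' 0 := by have := hp'anti 0; rwa [zero_add] at this
  have hψT : ψ T = B := by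
    have := hφAB 0
    simp only [hφ_def] at this
    rw [zero_add] at this
    rw [this, hp0, hψ0, hA0]; ring
  rw [hpT, hp'T, hψT] at hWT
  have hBval : B = - E T := by
    have h5 : p' 0 * B = p' 0 * (- E T) := by linear_combination hWT
    exact mul_left_cancel₀ hp'0 h5
  intro τ
  have := hφAB τ
  simp only [hφ_def] at this
  rw [this, hA0, hBval]
  simp only [hE_def]
  ring

/-- In the Floquet decomposition `w11(τ) = γ u̇0(τ) + e^{-f0 τ} b(τ)`, if
moreover `u0(τ + πρ) = -u0(τ)`, then both the periodic part `a(τ) = γ u̇0(τ)`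
and `b` are anti-periodic with anti-period `πρ` (i.e. contain only odd
harmonics). -/
theorem floquet_parts_antiperiodic
    (ρ Ω0 α β : ℝ) (hρ : 0 < ρ) (hΩ0 : 0 < Ω0) (hβ : 1 < β) (hαβ : β < α)
    (u0 : ℝ → ℝ) (hu0C : ContDiff ℝ 2 u0)
    (hnc : ∃ a b : ℝ, u0 a ≠ u0 b)
    (hper : Function.Periodic u0 (2 * π * ρ))
    (hode : ∀ τ : ℝ,
      deriv (deriv u0) τ + (ρ * Ω0)⁻¹ * (1 - β + 3 * β * (u0 τ) ^ 2) * deriv u0 τ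
        + ((ρ * Ω0)⁻¹) ^ 2 * ((α - β) * u0 τ + β * (u0 τ) ^ 3) = 0)
    (h1 : deriv u0 0 = 0) (h2 : deriv (deriv u0) 0 ≠ 0)
    (hu0anti : ∀ τ : ℝ, u0 (τ + π * ρ) = - u0 τ)
    (f0 : ℝ)
    (hf0def : f0 = (2 * π * ρ)⁻¹ *
      ∫ s in (0:ℝ)..(2 * π * ρ), (ρ * Ω0)⁻¹ * (1 - β + 3 * β * (u0 s) ^ 2))
    (hf0pos : 0 < f0)
    (w11 : ℝ → ℝ) (hw11C : ContDiff ℝ 2 w11)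
    (hw11ode : ∀ τ : ℝ,
      deriv (deriv w11) τ + (ρ * Ω0)⁻¹ * (1 - β + 3 * β * (u0 τ) ^ 2) * deriv w11 τ
        + ((ρ * Ω0)⁻¹ * (6 * β * u0 τ) * deriv u0 τ
          + ((ρ * Ω0)⁻¹) ^ 2 * ((α - β) + 3 * β * (u0 τ) ^ 2)) * w11 τ = 0)
    (hw110 : w11 0 = 1) (hw11d0 : deriv w11 0 = 0)
    (γ : ℝ) (b : ℝ → ℝ) (hb : Continuous b) (hbper : Function.Periodic b (2 * π * ρ))
    (hdecomp : ∀ τ : ℝ, w11 τ = γ * deriv u0 τ + Real.exp (-f0 * τ) * b τ) :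
    (∀ τ : ℝ, γ * deriv u0 (τ + π * ρ) = -(γ * deriv u0 τ)) ∧
    (∀ τ : ℝ, b (τ + π * ρ) = - b τ) := by
  set T := π * ρ with hT_def
  have hTpos : 0 < T := by rw [hT_def]; positivity
  have hu0cont : Continuous u0 := hu0C.continuous
  set p : ℝ → ℝ := deriv u0 with hp_def
  set F : ℝ → ℝ := fun τ => (ρ * Ω0)⁻¹ * (1 - β + 3 * β * (u0 τ) ^ 2) with hF_def
  set G : ℝ → ℝ := fun τ => ((ρ * Ω0)⁻¹) ^ 2 * ((α - β) * u0 τ + β * (u0 τ) ^ 3) with hG_def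
  set Q : ℝ → ℝ := fun τ => (ρ * Ω0)⁻¹ * (6 * β * u0 τ) * p τ
      + ((ρ * Ω0)⁻¹) ^ 2 * ((α - β) + 3 * β * (u0 τ) ^ 2) with hQ_def
  set r : ℝ → ℝ := fun τ => -(F τ * p τ + G τ) with hr_def
  -- regularity
  have hu0d : Differentiable ℝ u0 := hu0C.differentiable (by norm_num)
  have hu0C2 : ContDiff ℝ (1+1) u0 := by norm_num; exact hu0C
  have hpd : Differentiable ℝ p := ((contDiff_succ_iff_deriv.mp hu0C2).2.2).differentiable (by norm_num)
  have hu0has : ∀ τ, HasDerivAt u0 (p τ) τ := fun τ => (hu0d τ).hasDerivAt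
  have hderiv_eq : ∀ τ, deriv p τ = r τ := by
    intro τ
    have h0 := hode τ
    simp only [hr_def, hF_def, hG_def]
    linarith
  have hphas : ∀ τ, HasDerivAt p (r τ) τ := by
    intro τ
    have hh := (hpd τ).hasDerivAt
    rwa [hderiv_eq τ] at hh
  have hFcont : Continuous F := by
    rw [hF_def]; fun_prop
  -- derivative of r
  have hF' : ∀ τ, HasDerivAt F ((ρ*Ω0)⁻¹ * (6 * β * u0 τ * p τ)) τ := by
    intro τ
    have h := ((((hu0has τ).pow 2).const_mul (3*β)).const_add (1-β)).const_mul ((ρ*Ω0)⁻¹)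
    rw [hF_def]
    refine h.congr_deriv ?_
    push_cast
    ring
  have hG' : ∀ τ, HasDerivAt G (((ρ*Ω0)⁻¹)^2 * ((α-β) * p τ + 3 * β * (u0 τ)^2 * p τ)) τ := by
    intro τ
    have h := (((hu0has τ).const_mul (α-β)).add (((hu0has τ).pow 3).const_mul β)).const_mul (((ρ*Ω0)⁻¹)^2)
    rw [hG_def]
    refine h.congr_deriv ?_
    push_cast
    ring
  have hrhas : ∀ τ, HasDerivAt r (-(F τ * r τ + Q τ * p τ)) τ := by
    intro τ
    have h := (((hF' τ).mul (hphas τ)).add (hG' τ)).neg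
    refine h.congr_deriv ?_
    simp only [hr_def, hQ_def]
    ring
  -- w11 side
  have hw11d : Differentiable ℝ w11 := hw11C.differentiable (by norm_num)
  have hw11C2 : ContDiff ℝ (1+1) w11 := by norm_num; exact hw11C
  have hw1d : Differentiable ℝ (deriv w11) :=
    ((contDiff_succ_iff_deriv.mp hw11C2).2.2).differentiable (by norm_num)
  set ψ : ℝ → ℝ := fun t => w11 t - γ * p t with hψ_def
  set ψ' : ℝ → ℝ := fun t => deriv w11 t - γ * r t with hψ'_def
  have hψhas : ∀ τ, HasDerivAt ψ (ψ' τ) τ := fun τ =>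
    ((hw11d τ).hasDerivAt).sub ((hphas τ).const_mul γ)
  have hw11'' : ∀ τ, HasDerivAt (deriv w11) (-(F τ * deriv w11 τ + Q τ * w11 τ)) τ := by
    intro τ
    have hh := (hw1d τ).hasDerivAt
    have he : deriv (deriv w11) τ = -(F τ * deriv w11 τ + Q τ * w11 τ) := by
      have h0 := hw11ode τ
      simp only [hF_def, hQ_def]
      linarith
    rwa [he] at hh
  have hψ'has : ∀ τ, HasDerivAt ψ' (-(F τ * ψ' τ + Q τ * ψ τ)) τ := by
    intro τ
    have h := (hw11'' τ).sub ((hrhas τ).const_mul γ)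
    refine h.congr_deriv ?_
    simp only [hψ_def, hψ'_def]
    ring
  -- anti-periodicity facts
  have hpanti : ∀ τ, p (τ + T) = - p τ := by
    intro τ
    have e1 : HasDerivAt (fun t => u0 (t + T)) (p (τ + T)) τ := by
      simpa [Function.comp_def] using (hu0has (τ + T)).comp τ ((hasDerivAt_id τ).add_const T)
    have e2 : HasDerivAt (fun t => -u0 t) (-(p τ)) τ := (hu0has τ).neg
    have e3 : (fun t => u0 (t + T)) = (fun t => -u0 t) := funext hu0anti
    rw [e3] at e1
    exact e1.unique e2
  have hranti : ∀ τ, r (τ + T) = - r τ := by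
    intro τ
    simp only [hr_def, hF_def, hG_def, hu0anti, hpanti]
    ring
  have hFper : ∀ τ, F (τ + T) = F τ := by
    intro τ
    simp only [hF_def, hu0anti]
    ring
  have hQper : ∀ τ, Q (τ + T) = Q τ := by
    intro τ
    simp only [hQ_def, hu0anti, hpanti]
    ring
  -- initial values
  have hp0 : p 0 = 0 := h1
  have hr0ne : r 0 ≠ 0 := by rw [← hderiv_eq 0]; exact h2
  have hψ0 : ψ 0 = 1 := by simp only [hψ_def, hp0, hw110]; ring
  -- exponential scaling
  have hψeq : ∀ t, ψ t = Real.exp (-f0 * t) * b t := by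
    intro t
    simp only [hψ_def]
    have := hdecomp t
    linarith
  have hψ2T : ∀ τ, ψ (τ + 2*T) = Real.exp (-(f0 * (2*T))) * ψ τ := by
    intro τ
    rw [hψeq, hψeq]
    have hb2 : b (τ + 2*T) = b τ := by
      rw [show τ + 2*T = τ + 2*π*ρ by rw [hT_def]; ring]
      exact hbper τ
    rw [hb2, show (-f0 * (τ + 2*T)) = (-(f0*(2*T))) + (-f0*τ) by ring, Real.exp_add, mul_assoc]
  -- the integral of F over a half period
  have hFint : ∫ s in (0:ℝ)..T, F s = T * f0 := by
    have hi1 : IntervalIntegrable F MeasureTheory.volume 0 T := hFcont.intervalIntegrable _ _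
    have hi2 : IntervalIntegrable F MeasureTheory.volume T (2*π*ρ) := hFcont.intervalIntegrable _ _
    have hadd := intervalIntegral.integral_add_adjacent_intervals hi1 hi2
    have hperF : Function.Periodic F T := hFper
    have hshift := hperF.intervalIntegral_add_eq T 0
    have h2T : T + T = 2*π*ρ := by rw [hT_def]; ring
    rw [h2T, zero_add] at hshift
    have h2πρ : (2*π*ρ) ≠ 0 := by positivity
    have hIfull : ∫ s in (0:ℝ)..(2*π*ρ), F s = 2*π*ρ*f0 := by
      rw [hf0def]
      simp only [hF_def]
      field_simp
    have hhalf : (∫ s in (0:ℝ)..T, F s) + (∫ s in (0:ℝ)..T, F s) = 2*π*ρ*f0 := by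
      rw [← hIfull, ← hadd, hshift]
    have : T + T = 2*π*ρ := h2T
    nlinarith [hhalf]
  -- apply the key lemma
  have hlam : Real.exp (-(f0 * (2*T))) = (Real.exp (-∫ s in (0:ℝ)..T, F s))^2 := by
    rw [hFint, sq, ← Real.exp_add]
    congr 1
    ring
  have hlamne : Real.exp (-(f0 * (2*T))) ≠ 1 := by
    have : Real.exp (-(f0 * (2*T))) < 1 := by
      rw [Real.exp_lt_one_iff]
      nlinarith
    exact ne_of_lt this
  have hkey := key_lemma F Q hFcont T hFper hQper p r ψ ψ' hphas hrhas hψhas hψ'has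
    hpanti hranti hp0 hr0ne hψ0 (Real.exp (-(f0 * (2*T)))) hψ2T hlam hlamne
  constructor
  · intro τ
    rw [hpanti τ]
    ring
  · intro τ
    have hk := hkey τ
    rw [hFint, hψeq, hψeq] at hk
    have he : Real.exp (-f0*(τ+T)) = Real.exp (-(T*f0)) * Real.exp (-f0*τ) := by
      rw [← Real.exp_add]; congr 1; ring
    rw [he] at hk
    have hA := Real.exp_ne_zero (-(T*f0))
    have hB := Real.exp_ne_zero (-f0*τ)
    apply mul_left_cancel₀ hB
    apply mul_left_cancel₀ hA
    linear_combination hk
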